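/- arXiv:0712.2853 — 2 statements merged into one kernel-verified Lean document; each statement's English description precedes it below -/
import Mathlib

section
/- (Dehn twist axiom.) Let (g₁, g₂; h₁, h₂) be a standard-block datum of size 2 over G, so that g₂ = g₁⁻¹. Then ζ(β₁(g, h)) = φ_{g₁}(β₁(ζ(g, h))), and both sides equal the datum (g₁, g₁⁻¹; h₁, h₂ g₁⁻¹). -/
/-- A standard-block datum of size `n` over `G`: the ordered product of the `g`-tuple is `1`. -/
def IsBlock {G : Type*} [Group G] {n : ℕ} (g : Fin n → G) : Prop :=
  (List.ofFn g).prod = 1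

/-- The Z-move `ζ` on a tuple: `(g₁, …, g_n) ↦ (g_n, g₁, …, g_{n-1})`
(cyclic right shift, in terms of the rotation `i ↦ i + 1` of `Fin n`). -/
def zmove {G : Type*} [Group G] {n : ℕ} (g : Fin n → G) : Fin n → G :=
  fun i => g ((finRotate n).symm i)

/-- The braiding move `β` at (0-based) positions `i`, `i+1`: replaces `(gᵢ, gᵢ₊₁)` with
`(gᵢ * gᵢ₊₁ * gᵢ⁻¹, gᵢ)` and `(hᵢ, hᵢ₊₁)` with `(hᵢ₊₁ * gᵢ⁻¹, hᵢ)`, leaving all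
other entries unchanged. -/
def bmove {G : Type*} [Group G] {n : ℕ} (i : ℕ) (hi : i + 1 < n) (g h : Fin n → G) :
    (Fin n → G) × (Fin n → G) :=
  let i0 : Fin n := ⟨i, Nat.lt_of_succ_lt hi⟩
  let i1 : Fin n := ⟨i + 1, hi⟩
  (Function.update (Function.update g i0 (g i0 * g i1 * (g i0)⁻¹)) i1 (g i0),
   Function.update (Function.update h i0 (h i1 * (g i0)⁻¹)) i1 (h i0))

/-- The P-move `φ_x`, sending `(g, h)` to `(i ↦ x * gᵢ * x⁻¹, i ↦ hᵢ * x⁻¹)`. -/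
def pmove {G : Type*} [Group G] {n : ℕ} (x : G) (gh : (Fin n → G) × (Fin n → G)) :
    (Fin n → G) × (Fin n → G) :=
  (fun i => x * gh.1 i * x⁻¹, fun i => gh.2 i * x⁻¹)

/-- Dehn twist axiom: for a standard-block datum `(g₁, g₂; h₁, h₂)` of size 2 (so that
`g₂ = g₁⁻¹`), one has `ζ(β₁(g, h)) = φ_{g₁}(β₁(ζ(g, h)))`, and both sides equal
`(g₁, g₁⁻¹; h₁, h₂g₁⁻¹)`. -/
theorem dehn_twist_axiom {G : Type*} [Group G] (g h : Fin 2 → G) (hg : IsBlock g) :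
    g 1 = (g 0)⁻¹
    ∧ (zmove (bmove 0 (by norm_num) g h).1, zmove (bmove 0 (by norm_num) g h).2)
        = pmove (g 0)
            (bmove 0 (by norm_num) (zmove g) (zmove h))
    ∧ (zmove (bmove 0 (by norm_num) g h).1, zmove (bmove 0 (by norm_num) g h).2)
        = (![g 0, (g 0)⁻¹], ![h 0, h 1 * (g 0)⁻¹]) := by

  have hr0 : (finRotate 2).symm 0 = 1 := by decide
  have hr1 : (finRotate 2).symm 1 = 0 := by decide
  have hg1 : g 1 = (g 0)⁻¹ := by
    simp [IsBlock, List.ofFn_succ] at hg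
    exact eq_inv_of_mul_eq_one_right hg
  have hgm : g (-1) = (g 0)⁻¹ := hg1
  have hhm : h (-1) = h 1 := rfl
  refine ⟨hg1, ?_, ?_⟩ <;>
  · refine Prod.ext (funext fun i => ?_) (funext fun i => ?_) <;>
    fin_cases i <;>
      simp only [zmove, bmove, pmove, hr0, hr1] <;>
      simp [Function.update, Fin.ext_iff, hg1, hgm, hhm] <;>
      group
end

section
/- (Symmetry of the F-move.) Let (g, h) of size k+1 and (g', h') of size l+1 be glueable standard-block data over G. Then the data ζ⁻¹(g', h') = (g'₂, …, g'_{l+1}, g'₁; h'₂, …, h'_{l+1}, h'₁) and ζ(g, h) = (g_{k+1}, g₁, …, g_k; h_{k+1}, h₁, …, h_k) are glueable, and applying the Z-move l times to the F-concatenation of (g, h) and (g', h') equals the F-concatenation of ζ⁻¹(g', h') and ζ(g, h); concretely, both equal (g'₂, …, g'_{l+1}, g₁, …, g_k; h'₂, …, h'_{l+1}, h₁, …, h_k). -/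
/-- The inverse Z-move `ζ⁻¹` on a tuple: `(g₁, …, g_n) ↦ (g₂, …, g_n, g₁)`
(cyclic left shift). -/
def zinv {G : Type*} [Group G] {n : ℕ} (g : Fin n → G) : Fin n → G :=
  fun i => g (finRotate n i)

/-- The F-concatenation of a tuple of size `k+1` with a tuple of size `l+1`:
`(A₁, …, A_k, B₂, …, B_{l+1})` of size `k+l`. -/
def fcg {G : Type*} [Group G] {k l : ℕ} (A : Fin (k + 1) → G) (B : Fin (l + 1) → G) :
    Fin (k + l) → G :=
  Fin.append (Fin.init A) (Fin.tail B)

lemma zmove_snoc {G : Type*} [Group G] {n : ℕ} (w : Fin n → G) (x : G) :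
    zmove (Fin.snoc w x) = Fin.cons x w := by
  funext i
  rw [Fin.snoc_eq_cons_rotate]
  simp [zmove]

lemma zmove_cast {G : Type*} [Group G] {m n : ℕ} (e : m = n) (f : Fin n → G) :
    zmove (f ∘ Fin.cast e) = zmove f ∘ Fin.cast e := by
  subst e; rfl

lemma zmove_iter_cast {G : Type*} [Group G] {m n : ℕ} (b : ℕ) (e : m = n) (f : Fin n → G) :
    zmove^[b] (f ∘ Fin.cast e) = zmove^[b] f ∘ Fin.cast e := by
  subst e; rfl

lemma zmove_iter_append {G : Type*} [Group G] :
    ∀ (b a : ℕ) (u : Fin a → G) (v : Fin b → G),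
      zmove^[b] (Fin.append u v) = Fin.append v u ∘ Fin.cast (Nat.add_comm a b)
  | 0, a, u, v => by
      have hv : v = Fin.elim0 := funext fun i => i.elim0
      subst hv
      simp only [Function.iterate_zero, id_eq, Fin.append_elim0, Fin.elim0_append]
      rfl
  | (b+1), a, u, v => by
      have hv : Fin.append u v = Fin.append u (Fin.snoc (Fin.init v) (v (Fin.last b))) := by
        rw [Fin.snoc_init_self]
      rw [Function.iterate_succ_apply, hv, Fin.append_snoc, zmove_snoc]
      have h1 : (Fin.cons (v (Fin.last b)) (Fin.append u (Fin.init v)) : Fin (a+b+1) → G)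
          = Fin.append (Fin.cons (v (Fin.last b)) u) (Fin.init v)
            ∘ Fin.cast (Nat.add_right_comm a 1 b).symm := by
        rw [Fin.append_cons]
        funext i; simp
      rw [h1, zmove_iter_cast, zmove_iter_append b (a+1) _ _,
        Fin.append_right_cons, Fin.snoc_init_self]
      rfl

lemma init_zinv {G : Type*} [Group G] {l : ℕ} (B : Fin (l + 1) → G) :
    Fin.init (zinv B) = Fin.tail B := by
  funext i
  simp only [Fin.init, Fin.tail, zinv, finRotate_succ_apply, Fin.coeSucc_eq_succ]

lemma tail_zmove {G : Type*} [Group G] {k : ℕ} (A : Fin (k + 1) → G) :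
    Fin.tail (zmove A) = Fin.init A := by
  funext i
  simp only [Fin.init, Fin.tail, zmove]
  congr 1
  rw [Equiv.symm_apply_eq, finRotate_succ_apply, Fin.coeSucc_eq_succ]

lemma fcg_zinv_zmove {G : Type*} [Group G] {k l : ℕ} (A : Fin (k + 1) → G)
    (B : Fin (l + 1) → G) :
    fcg (zinv B) (zmove A) = Fin.append (Fin.tail B) (Fin.init A) := by
  rw [fcg, init_zinv, tail_zmove]


/-- Symmetry of the F-move: if `(g, h)` of size `k+1` and `(g', h')` of size `l+1` are
glueable, then `ζ⁻¹(g', h')` and `ζ(g, h)` are glueable, and applying the Z-move `l` times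
to the F-concatenation of `(g, h)` and `(g', h')` equals (up to the canonical
identification `Fin (k+l) ≃ Fin (l+k)`) the F-concatenation of `ζ⁻¹(g', h')` and
`ζ(g, h)`; concretely both equal `(g'₂, …, g'_{l+1}, g₁, …, g_k)`. -/
theorem f_move_symmetry {G : Type*} [Group G] (k l : ℕ)
    (g h : Fin (k + 1) → G) (g' h' : Fin (l + 1) → G)
    (hg : IsBlock g) (hg' : IsBlock g')
    (hglue1 : g (Fin.last k) * g' 0 = 1) (hglue2 : h (Fin.last k) = h' 0) :
    zinv g' (Fin.last l) * zmove g 0 = 1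
    ∧ zinv h' (Fin.last l) = zmove h 0
    ∧ zmove^[l] (fcg g g') = fcg (zinv g') (zmove g) ∘ Fin.cast (Nat.add_comm k l)
    ∧ zmove^[l] (fcg h h') = fcg (zinv h') (zmove h) ∘ Fin.cast (Nat.add_comm k l)
    ∧ fcg (zinv g') (zmove g) = Fin.append (Fin.tail g') (Fin.init g)
    ∧ fcg (zinv h') (zmove h) = Fin.append (Fin.tail h') (Fin.init h) := by
  have hsymm : (finRotate (k+1)).symm 0 = Fin.last k := by
    rw [Equiv.symm_apply_eq, finRotate_last]
  have hz : ∀ (f : Fin (k+1) → G), zmove f 0 = f (Fin.last k) := fun f => by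
    rw [zmove, hsymm]
  have hzi : ∀ (f : Fin (l+1) → G), zinv f (Fin.last l) = f 0 := fun f => by
    rw [zinv, finRotate_last]
  refine ⟨?_, ?_, ?_, ?_, fcg_zinv_zmove g g', fcg_zinv_zmove h h'⟩
  · rw [hz, hzi]
    rw [mul_eq_one_iff_eq_inv] at hglue1 ⊢
    rw [hglue1, inv_inv]
  · rw [hz, hzi, hglue2]
  · rw [fcg, zmove_iter_append, fcg_zinv_zmove]
  · rw [fcg, zmove_iter_append, fcg_zinv_zmove]
end
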